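/- arXiv:2106.11827 — 7 statements merged into one kernel-verified Lean document; each statement's English description precedes it below -/
import Mathlib

section
/- Let N ≥ 1 be an integer. If a nonnegative function f satisfies f(n) ≤ (4·e·n·|V|/N)^N for all positive integers n (with |V| ≥ 1 an integer and e Euler's number), then for every integer n > 2·N·log₂(12·|V|) one has f(n) < 2ⁿ. -/
/-- Counting step: if `f n ≤ (4 e n |V| / N) ^ N` for all `n > 0` (with `N, |V| ≥ 1`
integers) and `f` is nonnegative, then `f n < 2 ^ n` whenever `n > 2 N log₂ (12 |V|)`. -/
theorem warren_bound_lt_two_pow (N Vc : ℕ) (hN : 1 ≤ N) (hV : 1 ≤ Vc)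
    (f : ℕ → ℝ) (hf0 : ∀ n, 0 ≤ f n)
    (hf : ∀ n : ℕ, 0 < n → f n ≤ (4 * Real.exp 1 * n * Vc / N) ^ N) :
    ∀ n : ℕ, (n : ℝ) > 2 * N * Real.logb 2 (12 * Vc) → f n < 2 ^ n := by
  intro n hn
  have hl2 : (0.6931471803 : ℝ) < Real.log 2 := Real.log_two_gt_d9
  have hl2' : (0:ℝ) < Real.log 2 := by linarith
  have hV1 : (1:ℝ) ≤ (Vc:ℝ) := by exact_mod_cast hV
  have hN1 : (1:ℝ) ≤ (N:ℝ) := by exact_mod_cast hN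
  have hNpos : (0:ℝ) < (N:ℝ) := by linarith
  have hC1 : (12:ℝ) ≤ 12 * Vc := by linarith
  have hCpos : (0:ℝ) < 12 * (Vc:ℝ) := by linarith
  -- 7 log 2 ≤ 2 log (12 Vc)
  have hkey1 : 7 * Real.log 2 ≤ 2 * Real.log (12 * Vc) := by
    have h : Real.log ((2:ℝ) ^ (7:ℕ)) ≤ Real.log (((12:ℝ) * Vc) ^ (2:ℕ)) := by
      apply Real.log_le_log (by norm_num)
      nlinarith
    rw [Real.log_pow, Real.log_pow] at h
    push_cast at h
    linarith
  -- convert hypothesis to natural logs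
  have hn' : 2 * N * Real.log (12 * Vc) < n * Real.log 2 := by
    have h := hn
    rw [Real.logb, ← mul_div_assoc] at h
    exact (div_lt_iff₀ hl2').mp h
  -- n > 7 N
  have hn7 : 7 * (N:ℝ) < n := by
    have hlogC : (0:ℝ) < Real.log (12 * Vc) := by nlinarith
    nlinarith
  have hnpos : (0:ℝ) < (n:ℝ) := by nlinarith
  have hnpos' : 0 < n := by exact_mod_cast hnpos
  -- T = n / N
  set T : ℝ := (n : ℝ) / N with hT
  have hTN : T * N = n := by rw [hT, div_mul_cancel₀ _ hNpos.ne']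
  have hT7 : (7:ℝ) < T := by
    rw [hT, lt_div_iff₀ hNpos]; linarith
  have hTpos : (0:ℝ) < T := by linarith
  -- log T < (log 2 / 2) * T
  have hlogT : Real.log T < Real.log 2 / 2 * T := by
    have h1 : Real.log T = Real.log 7 + Real.log (T / 7) := by
      rw [← Real.log_mul (by norm_num) (by positivity),
        show (7:ℝ) * (T / 7) = T from by ring]
    have h2 : Real.log (T / 7) ≤ T / 7 - 1 :=
      Real.log_le_sub_one_of_pos (by positivity)
    have hlog7 : 2 * Real.log 7 < 7 * Real.log 2 := by
      have h : Real.log ((7:ℝ) ^ (2:ℕ)) < Real.log ((2:ℝ) ^ (7:ℕ)) := by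
        apply Real.log_lt_log (by norm_num); norm_num
      rw [Real.log_pow, Real.log_pow] at h
      push_cast at h
      linarith
    have hprod : 0 ≤ (T - 7) * (Real.log 2 / 2 - 1 / 7) := by
      apply mul_nonneg <;> nlinarith
    nlinarith
  -- log (12 Vc) < (log 2 / 2) * T
  have hlogC : Real.log (12 * Vc) < Real.log 2 / 2 * T := by
    have : (n:ℝ) * Real.log 2 = T * N * Real.log 2 := by rw [hTN]
    nlinarith [hn'.trans_eq this]
  -- key: B := 12 Vc T, then B ^ N < 2 ^ n
  set B : ℝ := 12 * Vc * T with hB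
  have hBpos : (0:ℝ) < B := by positivity
  have hlogB : Real.log B < T * Real.log 2 := by
    rw [hB, Real.log_mul (by positivity) (by positivity)]
    linarith
  have hmain : B ^ N < 2 ^ n := by
    rw [← Real.log_lt_log_iff (by positivity) (by positivity)]
    rw [Real.log_pow, Real.log_pow]
    push_cast
    calc (N:ℝ) * Real.log B < N * (T * Real.log 2) := by
          exact (mul_lt_mul_iff_right₀ hNpos).mpr hlogB
      _ = (n:ℝ) * Real.log 2 := by rw [← hTN]; ring
  -- first step: (4 e n Vc / N)^N ≤ B^N
  have he : Real.exp 1 < 3 := by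
    have := Real.exp_one_lt_d9; linarith
  have hbase : 4 * Real.exp 1 * n * Vc / N ≤ B := by
    rw [hB, hT, div_le_iff₀ hNpos,
      show 12 * (Vc:ℝ) * ((n:ℝ)/N) * N = 12 * Vc * n from by field_simp]
    have h3 : 4 * Real.exp 1 ≤ 12 := by linarith
    have hVpos : (0:ℝ) < Vc := by linarith
    calc 4 * Real.exp 1 * (n:ℝ) * Vc ≤ 12 * (n:ℝ) * Vc := by
          exact mul_le_mul_of_nonneg_right
            (mul_le_mul_of_nonneg_right h3 hnpos.le) hVpos.le
      _ = 12 * Vc * n := by ring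
  have hstep : (4 * Real.exp 1 * (n:ℝ) * Vc / N) ^ N ≤ B ^ N := by
    apply pow_le_pow_left₀ _ hbase
    positivity
  calc f n ≤ (4 * Real.exp 1 * (n:ℝ) * Vc / N) ^ N := hf n hnpos'
    _ ≤ B ^ N := hstep
    _ < 2 ^ n := hmain
end

section
/- The VC-dimension of the class of linear classifiers on p-th order tensors whose weight tensor is rank one, H = {X ↦ sign(⟨W, X⟩) : W = u₁⊗⋯⊗u_p, uⱼ ∈ ℝ^d}, is at least (d−1)·p. -/
open scoped BigOperators

/-- The sign function: `+1` if `0 ≤ t`, `-1` otherwise. -/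
noncomputable def signf (t : ℝ) : ℝ := if 0 ≤ t then 1 else -1

/-- A (real-valued, used as `±1`-valued via the sign of its values) hypothesis class
`H` shatters a finite set of points: every boolean labeling is realized. -/
def BShatters {X : Type*} (H : Set (X → ℝ)) (pts : Finset X) : Prop :=
  ∀ σ : X → Bool, ∃ h ∈ H, ∀ x ∈ pts, (0 ≤ h x ↔ σ x = true)

/-- VC-dimension: supremum of cardinalities of shattered finite sets. -/
noncomputable def VCdim {X : Type*} (H : Set (X → ℝ)) : ℕ∞ :=
  sSup {n : ℕ∞ | ∃ pts : Finset X, (pts.card : ℕ∞) = n ∧ BShatters H pts}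

/-- Pseudo-shattering of points `pts` with thresholds `t` by a real-valued class `H`. -/
def PShatters {X : Type*} (H : Set (X → ℝ)) (pts : Finset X) (t : X → ℝ) : Prop :=
  ∀ σ : X → Bool, ∃ h ∈ H, ∀ x ∈ pts, (h x < t x ↔ σ x = false)

/-- Pseudo-dimension: supremum of cardinalities of pseudo-shattered finite sets. -/
noncomputable def Pdim {X : Type*} (H : Set (X → ℝ)) : ℕ∞ :=
  sSup {n : ℕ∞ | ∃ (pts : Finset X) (t : X → ℝ), (pts.card : ℕ∞) = n ∧ PShatters H pts t}

/-- Growth function: the maximal number of distinct sign-behaviours of `H` on `n` points. -/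
noncomputable def growth {X : Type*} (H : Set (X → ℝ)) (n : ℕ) : ℕ :=
  sSup {m : ℕ | ∃ pts : Finset X, pts.card = n ∧
    m = Nat.card {σ : {x // x ∈ pts} → Bool | ∃ h ∈ H, ∀ x : {x // x ∈ pts}, (σ x = true ↔ 0 ≤ h x.1)}}

namespace VCaux

def Ipt (d p : ℕ) (j : Fin p) (i : Fin (d-1)) : Fin p → Fin d :=
  fun m => if m = j then ⟨i.1+1, by have := i.2; omega⟩ else ⟨0, by have := i.2; omega⟩

noncomputable def pt (d p : ℕ) (j : Fin p) (i : Fin (d-1)) : ((Fin p → Fin d) → ℝ) :=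
  fun idx => if idx = Ipt d p j i then 1 else 0

lemma Ipt_inj (d p : ℕ) :
    Function.Injective (fun q : Fin p × Fin (d-1) => Ipt d p q.1 q.2) := by
  rintro ⟨j, i⟩ ⟨j', i'⟩ h
  simp only at h
  have hj : j = j' := by
    by_contra hne
    have h1 := congrFun h j
    simp [Ipt, hne, Fin.ext_iff] at h1
  subst hj
  have h2 := congrFun h j
  simp [Ipt, Fin.ext_iff] at h2
  simp [Prod.ext_iff, Fin.ext_iff, h2]

lemma pt_inj (d p : ℕ) :
    Function.Injective (fun q : Fin p × Fin (d-1) => pt d p q.1 q.2) := by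
  rintro ⟨j, i⟩ ⟨j', i'⟩ h
  apply Ipt_inj d p
  simp only at h ⊢
  by_contra hne
  have := congrFun h (Ipt d p j i)
  rw [pt, pt, if_pos rfl, if_neg hne] at this
  norm_num at this

end VCaux

/-- The VC-dimension of the class of linear classifiers on `p`-th order tensors whose
weight tensor is rank one, `X ↦ sign ⟨u₁ ⊗ ⋯ ⊗ u_p, X⟩`, is at least `(d-1)·p`. -/
theorem vcdim_rank_one_classifiers_ge (d p : ℕ) (hd : 1 ≤ d) (hp : 1 ≤ p) :
    (((d - 1) * p : ℕ) : ℕ∞) ≤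
      VCdim {g : ((Fin p → Fin d) → ℝ) → ℝ |
        ∃ u : Fin p → Fin d → ℝ,
          g = fun X => signf (∑ idx : Fin p → Fin d, (∏ m, u m (idx m)) * X idx)} := by
    classical
  apply le_sSup
  refine ⟨Finset.image (fun q : Fin p × Fin (d-1) => VCaux.pt d p q.1 q.2) Finset.univ, ?_, ?_⟩
  · rw [Finset.card_image_of_injective _ (VCaux.pt_inj d p)]
    simp [mul_comm]
  · intro σ
    set u : Fin p → Fin d → ℝ := fun m k =>
      if hk : k.1 = 0 then 1
      else if σ (VCaux.pt d p m ⟨k.1 - 1, by have := k.2; omega⟩) then 1 else -1 with hu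
    refine ⟨_, ⟨u, rfl⟩, ?_⟩
    intro x hx
    simp only [Finset.mem_image, Finset.mem_univ, true_and] at hx
    obtain ⟨⟨j, i⟩, rfl⟩ := hx
    simp only
    have hsum : (∑ idx : Fin p → Fin d, (∏ m, u m (idx m)) * VCaux.pt d p j i idx)
        = ∏ m, u m (VCaux.Ipt d p j i m) := by
      simp [VCaux.pt, mul_ite, mul_one, mul_zero]
    have hprod : (∏ m, u m (VCaux.Ipt d p j i m))
        = u j ⟨i.1 + 1, by have := i.2; omega⟩ := by
      rw [Finset.prod_eq_single j]
      · simp [VCaux.Ipt]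
      · intro m _ hm
        simp [VCaux.Ipt, hm, hu]
      · simp
    have hval : u j ⟨i.1 + 1, by have := i.2; omega⟩
        = if σ (VCaux.pt d p j i) then 1 else -1 := by
      rw [hu]
      simp only
      rw [dif_neg (by omega)]
      congr 1
    rw [hsum, hprod, hval]
    rcases h : σ (VCaux.pt d p j i) with _ | _ <;> norm_num [h, signf]
end

section
/- Let r ≤ d and let P ∈ ℝ^{d×r} be the matrix whose top r×r block is the identity and remaining rows are zero. For any core tensor G ∈ ℝ^{r×⋯×r} (p modes), the Tucker tensor T = G ×₁ P ×₂ P ⋯ ×_p P satisfies T_{i₁,…,i_p} = G_{i₁,…,i_p} for all i₁,…,i_p ∈ {1,…,r}. Consequently, the set of p-th order tensors of Tucker rank at most r sign-shatters r^p indices, and the pseudo-dimension of the corresponding completion class is at least r^p. -/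
open scoped BigOperators

/-- The `d × r` selection matrix whose top `r × r` block is the identity. -/
noncomputable def selP (d r : ℕ) : Fin d → Fin r → ℝ :=
  fun a b => if (a : ℕ) = (b : ℕ) then 1 else 0

/-- The completion class of `p`-th order `d`-dimensional tensors of Tucker rank at
most `r`: entries of `G ×₁ U₁ ⋯ ×_p U_p` with core `G ∈ ℝ^{r×⋯×r}`. -/
def tuckerCompletion (d r p : ℕ) : Set ((Fin p → Fin d) → ℝ) :=
  {g | ∃ (G : (Fin p → Fin r) → ℝ) (U : Fin p → Fin d → Fin r → ℝ),
    g = fun idx => ∑ j : Fin p → Fin r, G j * ∏ m, U m (idx m) (j m)}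

/-- With the selection factor matrices `P`, the Tucker tensor
`T = G ×₁ P ⋯ ×_p P` agrees with its core `G` on the indices in `[r]^p`; consequently
the Tucker-rank-`≤ r` tensors sign-shatter `r^p` indices and the pseudo-dimension of the
Tucker completion class is at least `r^p`. -/
theorem tucker_core_recovery_and_pdim (d r p : ℕ) (hr : r ≤ d) (hp : 1 ≤ p) :
    (∀ (G : (Fin p → Fin r) → ℝ) (idx : Fin p → Fin r),
      (∑ j : Fin p → Fin r, G j * ∏ m, selP d r (Fin.castLE hr (idx m)) (j m)) = G idx)
    ∧ (r ^ p : ℕ∞) ≤ Pdim (tuckerCompletion d r p) := by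
  have key : ∀ (G : (Fin p → Fin r) → ℝ) (idx : Fin p → Fin r),
      (∑ j : Fin p → Fin r, G j * ∏ m, selP d r (Fin.castLE hr (idx m)) (j m)) = G idx := by
    intro G idx
    rw [Finset.sum_eq_single idx]
    · simp [selP]
    · intro j _ hj
      have hm : ∃ m, idx m ≠ j m := by
        by_contra h; push_neg at h; exact hj (funext fun m => (h m).symm)
      obtain ⟨m, hm⟩ := hm
      have hz : (∏ m, selP d r (Fin.castLE hr (idx m)) (j m)) = 0 := by
        apply Finset.prod_eq_zero (Finset.mem_univ m)
        simp only [selP, Fin.coe_castLE]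
        rw [if_neg (fun h => hm (Fin.ext h))]
      rw [hz, mul_zero]
    · intro h; exact absurd (Finset.mem_univ idx) h
  refine ⟨key, ?_⟩
  apply le_sSup
  refine ⟨Finset.univ.image (fun idx : Fin p → Fin r => fun m => Fin.castLE hr (idx m)),
    fun _ => 0, ?_, ?_⟩
  · rw [Finset.card_image_of_injective]
    · simp
    · intro a b hab
      funext m
      have := congrFun hab m
      exact Fin.castLE_injective hr this
  · intro σ
    set f : (Fin p → Fin r) → (Fin p → Fin d) := fun idx m => Fin.castLE hr (idx m) with hf
    refine ⟨fun idx => ∑ j : Fin p → Fin r,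
        (if σ (f j) = true then (1:ℝ) else -1) * ∏ m, selP d r (idx m) (j m),
      ⟨_, fun _ => selP d r, rfl⟩, ?_⟩
    intro x hx
    simp only [Finset.mem_image, Finset.mem_univ, true_and] at hx
    obtain ⟨idx, rfl⟩ := hx
    have hval := key (fun j => if σ (f j) = true then (1:ℝ) else -1) idx
    simp only [hf] at hval ⊢
    rw [hval]
    by_cases hσ : σ (fun m => Fin.castLE hr (idx m)) = true <;> simp [hσ] <;> norm_num
end

section
/- For r ≤ d^{p−1}, the set of p-th order d-dimensional tensors of CP rank at most r sign-shatters a set of r·d multi-indices; hence the pseudo-dimension of the CP completion class {(i₁,…,i_p) ↦ T_{i₁,…,i_p} : CP-rank(T) ≤ r} is at least r·d. -/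
open scoped BigOperators

/-- The completion class of `p`-th order `d`-dimensional tensors of CP rank at most
`r`: functions `(i₁,…,i_p) ↦ T_{i₁,…,i_p}` with `T = Σ_{τ=1}^r a⁽¹⁾_τ ⊗ ⋯ ⊗ a⁽ᵖ⁾_τ`. -/
def cpCompletion (d r p : ℕ) : Set ((Fin p → Fin d) → ℝ) :=
  {g | ∃ a : Fin r → Fin p → Fin d → ℝ, g = fun i => ∑ τ : Fin r, ∏ m, a τ m (i m)}

/-- Auxiliary realization lemma: any matrix `A` can be realized on the shattered index set. -/
lemma cp_realize (d r q : ℕ) (enc : Fin r ↪ (Fin q → Fin d)) (A : Fin d → Fin r → ℝ) :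
    ∃ g ∈ cpCompletion d r (q + 1),
      ∀ (τ' : Fin r) (i : Fin d), g (Fin.cases i (enc τ')) = A i τ' := by
  classical
  refine ⟨fun i => ∑ τ : Fin r,
      ∏ m, (Fin.cases (fun j => A j τ) (fun m j => if enc τ m = j then 1 else 0) :
        Fin (q+1) → Fin d → ℝ) m (i m),
    ⟨_, rfl⟩, ?_⟩
  intro τ' i
  dsimp only
  rw [Finset.sum_eq_single τ']
  · rw [Fin.prod_univ_succ]; simp
  · intro τ _ hne
    have : enc τ ≠ enc τ' := fun h => hne (enc.injective h)
    obtain ⟨m, hm⟩ := Function.ne_iff.1 this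
    rw [Fin.prod_univ_succ]
    refine mul_eq_zero_of_right _ (Finset.prod_eq_zero (Finset.mem_univ m) ?_)
    simp [hm]
  · simp

/-- For `r ≤ d^(p-1)`, the tensors of CP rank at most `r` sign-shatter a set of `r·d`
multi-indices; hence the pseudo-dimension of the CP completion class is at least `r·d`. -/
theorem cp_completion_pdim_ge (d r p : ℕ) (hd : 1 ≤ d) (hp : 1 ≤ p)
    (hr : r ≤ d ^ (p - 1)) :
    (∃ S : Finset (Fin p → Fin d), S.card = r * d ∧ BShatters (cpCompletion d r p) S)
    ∧ ((r * d : ℕ) : ℕ∞) ≤ Pdim (cpCompletion d r p) := by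
  classical
  obtain ⟨q, rfl⟩ : ∃ q, p = q + 1 := ⟨p - 1, (Nat.succ_pred_eq_of_pos hp).symm⟩
  simp only [Nat.add_sub_cancel] at hr
  obtain ⟨enc⟩ : Nonempty (Fin r ↪ (Fin q → Fin d)) :=
    Function.Embedding.nonempty_of_card_le (by simpa using hr)
  set φ : Fin r × Fin d → (Fin (q+1) → Fin d) :=
    fun p => Fin.cases p.2 (enc p.1) with hφ
  have hφinj : Function.Injective φ := by
    rintro ⟨τ, i⟩ ⟨τ', i'⟩ h
    have h0 : i = i' := by simpa [hφ] using congrFun h 0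
    have h1 : enc τ = enc τ' := by
      funext m
      simpa [hφ] using congrFun h m.succ
    exact Prod.ext (enc.injective h1) h0
  set S : Finset (Fin (q+1) → Fin d) := Finset.image φ Finset.univ with hS
  have hcard : S.card = r * d := by
    rw [hS, Finset.card_image_of_injective _ hφinj]
    simp
  have hBS : BShatters (cpCompletion d r (q+1)) S := by
    intro σ
    obtain ⟨g, hg, hgval⟩ := cp_realize d r q enc
      (fun i τ => if σ (φ (τ, i)) = true then 1 else -1)
    refine ⟨g, hg, ?_⟩
    intro x hx
    obtain ⟨⟨τ, i⟩, -, rfl⟩ := Finset.mem_image.1 hx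
    have := hgval τ i
    rw [show (Fin.cases i (enc τ) : Fin (q+1) → Fin d) = φ (τ, i) from rfl] at this
    by_cases h : σ (φ (τ, i)) = true <;> simp [h] at this ⊢ <;> rw [this] <;> norm_num
  have hPS : PShatters (cpCompletion d r (q+1)) S (fun _ => 0) := by
    intro σ
    obtain ⟨g, hg, hgval⟩ := cp_realize d r q enc
      (fun i τ => if σ (φ (τ, i)) = true then 1 else -1)
    refine ⟨g, hg, ?_⟩
    intro x hx
    obtain ⟨⟨τ, i⟩, -, rfl⟩ := Finset.mem_image.1 hx
    have := hgval τ i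
    rw [show (Fin.cases i (enc τ) : Fin (q+1) → Fin d) = φ (τ, i) from rfl] at this
    by_cases h : σ (φ (τ, i)) = true <;> simp [h] at this ⊢ <;> rw [this] <;> norm_num

  refine ⟨⟨S, hcard, hBS⟩, le_sSup ?_⟩
  exact ⟨S, fun _ => 0, by rw [hcard], hPS⟩
end

section
/- Let p = 3k and r = d. Consider tensor-train tensors of rank r with cores G^{(1)},…,G^{(p)} where: G^{(1)}_{j,:} = e_jᵀ, G^{(p)}_{j,:} = e_j, G^{(3s+3)}_{:,j,:} = e_j e₁ᵀ for s = 0,…,k−2, G^{(3s+1)}_{:,j,:} = e₁ e_jᵀ for s = 1,…,k−1, and the cores G^{(3s+2)} ∈ ℝ^{d×d×d} arbitrary. Then the resulting TT tensor equals the outer product G^{(2)} ⊗ G^{(5)} ⊗ ⋯ ⊗ G^{(p−1)} of the free cores. -/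
open scoped BigOperators

/-- Entry of a tensor-train tensor of bond dimension `r` with cores
`G m ∈ ℝ^{r × d × r}`: contraction over bond indices, with the boundary bond indices
forced to `0` (so the first core acts as a `d × r` matrix `G¹_{j,:}` and the last as an
`r × d` matrix). -/
noncomputable def ttEntry (d r p : ℕ) (G : Fin p → Fin r → Fin d → Fin r → ℝ)
    (i : Fin p → Fin d) : ℝ :=
  ∑ β : Fin (p + 1) → Fin r,
    (if (β 0).1 = 0 ∧ (β (Fin.last p)).1 = 0 then (1 : ℝ) else 0) *
      ∏ m : Fin p, G m (β m.castSucc) (i m) (β m.succ)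

private lemma prod_range_three_aux (f : ℕ → ℝ) (k : ℕ) :
    ∏ m ∈ Finset.range (3 * k), f m
      = ∏ s ∈ Finset.range k, (f (3*s) * f (3*s+1) * f (3*s+2)) := by
  induction k with
  | zero => simp
  | succ n ih =>
    have h3 : 3 * (n+1) = 3*n + 1 + 1 + 1 := by ring
    rw [Finset.prod_range_succ, ← ih, h3, Finset.prod_range_succ,
      Finset.prod_range_succ, Finset.prod_range_succ]
    ring_nf

/-- For `p = 3k` and `r = d`, the TT tensor whose cores are
`G⁽¹⁾_{j,:} = e_jᵀ`, `G⁽ᵖ⁾_{j,:} = e_j`, `G⁽³ˢ⁺³⁾_{:,j,:} = e_j e₁ᵀ`,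
`G⁽³ˢ⁺¹⁾_{:,j,:} = e₁ e_jᵀ`, with the cores `G⁽³ˢ⁺²⁾ = B s ∈ ℝ^{d×d×d}` free, equals
the outer product of the free cores:
`T_{i₁,…,i_p} = Π_s (B s)_{i_{3s+1}, i_{3s+2}, i_{3s+3}}`.
(0-based positions: `m % 3 = 0` cores are `e₁ e_jᵀ`-type, `m % 3 = 2` are `e_j e₁ᵀ`-type,
`m % 3 = 1` are the free cores; boundary bonds are forced to `0`.) -/
theorem tt_blocks_eq_outer_product (d k : ℕ) (hd : 0 < d) (hk : 0 < k)
    (B : Fin k → Fin d → Fin d → Fin d → ℝ) (i : Fin (3 * k) → Fin d) :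
    ttEntry d d (3 * k)
      (fun m a j b =>
        if m.1 % 3 = 0 then (if a.1 = 0 ∧ b = j then 1 else 0)
        else if m.1 % 3 = 1 then B ⟨m.1 / 3, by have := m.2; omega⟩ a j b
        else (if a = j ∧ b.1 = 0 then 1 else 0)) i
    = ∏ s : Fin k,
        B s (i ⟨3 * s.1, by have := s.2; omega⟩)
            (i ⟨3 * s.1 + 1, by have := s.2; omega⟩)
            (i ⟨3 * s.1 + 2, by have := s.2; omega⟩) := by
  classical
  unfold ttEntry
  have hlt1 : ∀ t : Fin (3*k+1), t.1 % 3 = 1 → t.1 - 1 < 3*k := fun t h => by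
    have := t.2; omega
  have hlt2 : ∀ t : Fin (3*k+1), t.1 % 3 = 2 → t.1 < 3*k := fun t h => by
    have := t.2; omega
  set G : Fin (3*k) → Fin d → Fin d → Fin d → ℝ := fun m a j b =>
        if m.1 % 3 = 0 then (if a.1 = 0 ∧ b = j then 1 else 0)
        else if m.1 % 3 = 1 then B ⟨m.1 / 3, by have := m.2; omega⟩ a j b
        else (if a = j ∧ b.1 = 0 then 1 else 0) with hG
  set β₀ : Fin (3*k+1) → Fin d := fun t =>
    if h : t.1 % 3 = 1 then i ⟨t.1 - 1, hlt1 t h⟩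
    else if h2 : t.1 % 3 = 2 then i ⟨t.1, hlt2 t h2⟩
    else ⟨0, hd⟩ with hβ₀
  have hA : ∀ (t : Fin (3*k+1)) (h : t.1 % 3 = 1), β₀ t = i ⟨t.1 - 1, hlt1 t h⟩ := by
    intro t h; rw [hβ₀]; simp only []; rw [dif_pos h]
  have hBv : ∀ (t : Fin (3*k+1)) (h : t.1 % 3 = 2), β₀ t = i ⟨t.1, hlt2 t h⟩ := by
    intro t h; rw [hβ₀]; simp only []; rw [dif_neg (by omega), dif_pos h]
  have hC : ∀ (t : Fin (3*k+1)), t.1 % 3 = 0 → β₀ t = ⟨0, hd⟩ := by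
    intro t h; rw [hβ₀]; simp only []; rw [dif_neg (by omega), dif_neg (by omega)]
  rw [Finset.sum_eq_single β₀]
  · -- value at β₀
    have h0 : (β₀ 0).1 = 0 := by rw [hC 0 (by simp)]
    have hlast : (β₀ (Fin.last (3*k))).1 = 0 := by
      rw [hC (Fin.last (3*k)) (by simp [Fin.last])]
    rw [if_pos ⟨h0, hlast⟩, one_mul]
    set F : ℕ → ℝ := fun n =>
      if h : n < 3*k then
        G ⟨n,h⟩ (β₀ (Fin.castSucc ⟨n,h⟩)) (i ⟨n,h⟩) (β₀ (Fin.succ ⟨n,h⟩))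
      else 1 with hF
    have hLF : (∏ m : Fin (3*k), G m (β₀ m.castSucc) (i m) (β₀ m.succ))
        = ∏ n ∈ Finset.range (3*k), F n := by
      rw [← Fin.prod_univ_eq_prod_range]
      refine Finset.prod_congr rfl fun m _ => ?_
      rw [hF]
      beta_reduce
      rw [dif_pos m.2]
    rw [hLF, prod_range_three_aux,
      ← Fin.prod_univ_eq_prod_range (fun s => F (3*s) * F (3*s+1) * F (3*s+2)) k]
    refine Finset.prod_congr rfl fun s _ => ?_
    have hs := s.2
    have l0 : 3*s.1 < 3*k := by omega
    have l1 : 3*s.1 + 1 < 3*k := by omega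
    have l2 : 3*s.1 + 2 < 3*k := by omega
    have e0 : F (3*s.1) = 1 := by
      rw [hF]; simp only []; rw [dif_pos l0]
      have c1 : β₀ (Fin.castSucc ⟨3*s.1, l0⟩) = ⟨0, hd⟩ := hC _ (by simp <;> omega)
      have c2 : β₀ (Fin.succ ⟨3*s.1, l0⟩) = i ⟨3*s.1, l0⟩ := by
        rw [hA _ (by simp [Fin.val_succ] <;> omega)]
        congr 1 <;> exact Fin.ext (by simp [Fin.val_succ])
      rw [hG]; simp only []
      rw [if_pos (show (⟨3*s.1, l0⟩ : Fin (3*k)).1 % 3 = 0 by simp <;> omega)]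
      rw [c1, c2]; simp
    have e1 : F (3*s.1+1) = B s (i ⟨3*s.1, l0⟩) (i ⟨3*s.1+1, l1⟩) (i ⟨3*s.1+2, l2⟩) := by
      rw [hF]; simp only []; rw [dif_pos l1]
      have c1 : β₀ (Fin.castSucc ⟨3*s.1+1, l1⟩) = i ⟨3*s.1, l0⟩ := by
        rw [hA _ (by simp <;> omega)]
        congr 1 <;> exact Fin.ext (by simp)
      have c2 : β₀ (Fin.succ ⟨3*s.1+1, l1⟩) = i ⟨3*s.1+2, l2⟩ := by
        rw [hBv _ (by simp [Fin.val_succ] <;> omega)]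
        congr 1 <;> exact Fin.ext (by simp [Fin.val_succ])
      rw [hG]; simp only []
      rw [if_neg (show ¬ (⟨3*s.1+1, l1⟩ : Fin (3*k)).1 % 3 = 0 by simp <;> omega),
        if_pos (show (⟨3*s.1+1, l1⟩ : Fin (3*k)).1 % 3 = 1 by simp <;> omega)]
      rw [c1, c2]
      congr 1 <;> exact Fin.ext (by simp <;> omega)
    have e2 : F (3*s.1+2) = 1 := by
      rw [hF]; simp only []; rw [dif_pos l2]
      have c1 : β₀ (Fin.castSucc ⟨3*s.1+2, l2⟩) = i ⟨3*s.1+2, l2⟩ := by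
        rw [hBv _ (by simp <;> omega)]
        try congr 1
      have c2 : β₀ (Fin.succ ⟨3*s.1+2, l2⟩) = ⟨0, hd⟩ :=
        hC _ (by simp [Fin.val_succ] <;> omega)
      rw [hG]; simp only []
      rw [if_neg (show ¬ (⟨3*s.1+2, l2⟩ : Fin (3*k)).1 % 3 = 0 by simp <;> omega),
        if_neg (show ¬ (⟨3*s.1+2, l2⟩ : Fin (3*k)).1 % 3 = 1 by simp <;> omega)]
      rw [c1, c2]; simp
    rw [e0, e1, e2, one_mul, mul_one]
  · -- other β give zero
    intro β _ hne
    by_contra hterm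
    have hcond : (β 0).1 = 0 ∧ (β (Fin.last (3*k))).1 = 0 := by
      by_contra hc
      rw [if_neg hc, zero_mul] at hterm
      exact hterm rfl
    rw [if_pos hcond, one_mul] at hterm
    have hf : ∀ m ∈ (Finset.univ : Finset (Fin (3*k))),
        G m (β m.castSucc) (i m) (β m.succ) ≠ 0 := Finset.prod_ne_zero_iff.mp hterm
    apply hne
    funext t
    have ht := t.2
    rcases (show t.1 % 3 = 0 ∨ t.1 % 3 = 1 ∨ t.1 % 3 = 2 by omega) with h | h | h
    · rw [hC t h]
      by_cases hte : t.1 = 3*k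
      · have : t = Fin.last (3*k) := Fin.ext hte
        rw [this]; exact Fin.ext hcond.2
      · have htlt : t.1 < 3*k := by omega
        have hm := hf ⟨t.1, htlt⟩ (Finset.mem_univ _)
        rw [hG] at hm; simp only [] at hm
        rw [if_pos (show (⟨t.1, htlt⟩ : Fin (3*k)).1 % 3 = 0 by simpa using h)] at hm
        have hc := (ite_ne_right_iff.mp hm).1
        have : Fin.castSucc (⟨t.1, htlt⟩ : Fin (3*k)) = t := Fin.ext (by simp)
        rw [this] at hc
        exact Fin.ext hc.1
    · have htlt : t.1 - 1 < 3*k := hlt1 t h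
      have hm := hf ⟨t.1 - 1, htlt⟩ (Finset.mem_univ _)
      rw [hG] at hm; simp only [] at hm
      rw [if_pos (show (⟨t.1-1, htlt⟩ : Fin (3*k)).1 % 3 = 0 by simp <;> omega)] at hm
      have hc := (ite_ne_right_iff.mp hm).1
      have hst : Fin.succ (⟨t.1-1, htlt⟩ : Fin (3*k)) = t :=
        Fin.ext (by simp [Fin.val_succ] <;> omega)
      rw [hst] at hc
      rw [hA t h]
      exact hc.2
    · have htlt : t.1 < 3*k := hlt2 t h
      have hm := hf ⟨t.1, htlt⟩ (Finset.mem_univ _)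
      rw [hG] at hm; simp only [] at hm
      rw [if_neg (show ¬ (⟨t.1, htlt⟩ : Fin (3*k)).1 % 3 = 0 by simp <;> omega),
        if_neg (show ¬ (⟨t.1, htlt⟩ : Fin (3*k)).1 % 3 = 1 by simp <;> omega)] at hm
      have hc := (ite_ne_right_iff.mp hm).1
      have : Fin.castSucc (⟨t.1, htlt⟩ : Fin (3*k)) = t := Fin.ext (by simp)
      rw [this] at hc
      rw [hBv t h]
      exact hc.1
  · intro hβ₀mem
    exact absurd (Finset.mem_univ β₀) hβ₀mem
end

section
/- For p = 3k and r = d, the pseudo-dimension of the completion class of p-th order tensor-train tensors of rank at most r is at least k·(d³−1) = p(r²d−1)/3. -/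
open scoped BigOperators

section Aux

lemma ite_ne_zero_imp {c : Prop} [Decidable c] (h : (if c then (1:ℝ) else 0) ≠ 0) : c := by
  by_contra hc; rw [if_neg hc] at h; exact h rfl

variable (d k : ℕ) [NeZero d]

noncomputable def prodCores (A : Fin k → Fin d → Fin d → Fin d → ℝ) :
    Fin (3 * k) → Fin d → Fin d → Fin d → ℝ :=
  fun m α x β =>
    if m.1 % 3 = 0 then (if α = 0 ∧ β = x then 1 else 0)
    else if h : m.1 % 3 = 1 then A ⟨m.1 / 3, by have := m.2; omega⟩ α x β
    else (if α = x ∧ β = 0 then 1 else 0)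

noncomputable def bstar (i : Fin (3 * k) → Fin d) : Fin (3 * k + 1) → Fin d :=
  fun n =>
    if h1 : n.1 % 3 = 1 then i ⟨n.1 - 1, by have := n.2; omega⟩
    else if h2 : n.1 % 3 = 2 then i ⟨n.1, by have := n.2; omega⟩
    else 0

variable {d k}

lemma bstar_zero (i : Fin (3 * k) → Fin d) (n : Fin (3 * k + 1)) (h : n.1 % 3 = 0) :
    bstar d k i n = 0 := by
  rw [bstar, dif_neg (by omega), dif_neg (by omega)]

lemma bstar_one (i : Fin (3 * k) → Fin d) (n : Fin (3 * k + 1)) (h : n.1 % 3 = 1)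
    (m : Fin (3 * k)) (hm : m.1 = n.1 - 1) : bstar d k i n = i m := by
  rw [bstar, dif_pos h]; congr 1; exact Fin.ext hm.symm

lemma bstar_two (i : Fin (3 * k) → Fin d) (n : Fin (3 * k + 1)) (h : n.1 % 3 = 2)
    (m : Fin (3 * k)) (hm : m.1 = n.1) : bstar d k i n = i m := by
  rw [bstar, dif_neg (by omega), dif_pos h]; congr 1; exact Fin.ext hm.symm

lemma factor_eq (A : Fin k → Fin d → Fin d → Fin d → ℝ) (i : Fin (3 * k) → Fin d)
    (m : Fin (3 * k)) :
    prodCores d k A m (bstar d k i m.castSucc) (i m) (bstar d k i m.succ) =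
      if h : m.1 % 3 = 1 then
        A ⟨m.1 / 3, by have := m.2; omega⟩ (i ⟨m.1 - 1, by have := m.2; omega⟩) (i m)
          (i ⟨m.1 + 1, by have := m.2; omega⟩)
      else 1 := by
  have hcs : (m.castSucc).1 = m.1 := rfl
  have hsu : (m.succ).1 = m.1 + 1 := rfl
  have h3 : m.1 % 3 = 0 ∨ m.1 % 3 = 1 ∨ m.1 % 3 = 2 := by omega
  rcases h3 with h0 | h1 | h2
  · rw [prodCores, if_pos h0, dif_neg (by omega), if_pos]
    exact ⟨bstar_zero i _ (by rw [hcs]; exact h0),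
      bstar_one i _ (by rw [hsu]; omega) m (by omega)⟩
  · rw [prodCores, if_neg (by omega), dif_pos h1, dif_pos h1]
    rw [bstar_one i m.castSucc (by rw [hcs]; exact h1) ⟨m.1 - 1, by have := m.2; omega⟩ (by simp [hcs]),
      bstar_two i m.succ (by rw [hsu]; omega) ⟨m.1 + 1, by have := m.2; omega⟩ (by simp [hsu])]
  · rw [prodCores, if_neg (by omega), dif_neg (by omega), dif_neg (by omega), if_pos]
    exact ⟨bstar_two i _ (by rw [hcs]; exact h2) m rfl,
      bstar_zero i _ (by rw [hsu]; omega)⟩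

def eIdx (k : ℕ) : Fin k × Fin 3 → Fin (3 * k) :=
  fun x => ⟨3 * x.1.1 + x.2.1, by have := x.1.2; have := x.2.2; omega⟩

lemma eIdx_bij : Function.Bijective (eIdx k) := by
  rw [Fintype.bijective_iff_injective_and_card]
  constructor
  · intro x y h
    have hv : 3 * x.1.1 + x.2.1 = 3 * y.1.1 + y.2.1 := congrArg Fin.val h
    have h1 := x.2.2; have h2 := y.2.2
    exact Prod.ext (Fin.ext (by omega)) (Fin.ext (by omega))
  · simp [mul_comm]

lemma ttEntry_prodCores (A : Fin k → Fin d → Fin d → Fin d → ℝ)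
    (i : Fin (3 * k) → Fin d) :
    ttEntry d d (3 * k) (prodCores d k A) i =
      ∏ q : Fin k, A q (i ⟨3 * q.1, by have := q.2; omega⟩)
        (i ⟨3 * q.1 + 1, by have := q.2; omega⟩)
        (i ⟨3 * q.1 + 2, by have := q.2; omega⟩) := by
  rw [ttEntry, Fintype.sum_eq_single (bstar d k i)]
  · have hb0 : (bstar d k i 0).1 = 0 := by
      rw [bstar_zero i 0 (by simp)]; simp
    have hbl : (bstar d k i (Fin.last (3 * k))).1 = 0 := by
      have hl : (Fin.last (3 * k)).1 % 3 = 0 := by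
        have : (Fin.last (3 * k)).1 = 3 * k := rfl
        omega
      rw [bstar_zero i _ hl]; simp
    rw [if_pos ⟨hb0, hbl⟩, one_mul]
    rw [← Function.Bijective.prod_comp eIdx_bij, Fintype.prod_prod_type]
    apply Finset.prod_congr rfl
    intro q _
    rw [Fin.prod_univ_three]
    have hq := q.2
    have hv0 : (eIdx k (q, 0)).1 = 3 * q.1 := rfl
    have hv1 : (eIdx k (q, 1)).1 = 3 * q.1 + 1 := rfl
    have hv2 : (eIdx k (q, 2)).1 = 3 * q.1 + 2 := rfl
    have c0 : ¬((eIdx k (q, (0 : Fin 3))).1 % 3 = 1) := by rw [hv0]; omega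
    have c1 : (eIdx k (q, (1 : Fin 3))).1 % 3 = 1 := by rw [hv1]; omega
    have c2 : ¬((eIdx k (q, (2 : Fin 3))).1 % 3 = 1) := by rw [hv2]; omega
    rw [factor_eq, factor_eq, factor_eq, dif_neg c0, dif_pos c1, dif_neg c2,
      one_mul, mul_one]
    congr 1
    exact Fin.ext (show (eIdx k (q, 1)).1 / 3 = q.1 by omega)
  · intro β hβ
    by_contra h0
    rcases mul_ne_zero_iff.mp h0 with ⟨h1, h2⟩
    have hb := ite_ne_zero_imp h1
    have hfac : ∀ m : Fin (3 * k),
        prodCores d k A m (β m.castSucc) (i m) (β m.succ) ≠ 0 := by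
      intro m hm
      exact h2 (Finset.prod_eq_zero (Finset.mem_univ m) hm)
    apply hβ
    funext n
    have hn := n.2
    have h3 : n.1 % 3 = 0 ∨ n.1 % 3 = 1 ∨ n.1 % 3 = 2 := by omega
    rcases h3 with h0' | h1' | h2'
    · rw [bstar_zero i n h0']
      by_cases hend : n.1 = 3 * k
      · have : n = Fin.last (3 * k) := Fin.ext hend
        rw [this]; exact Fin.ext hb.2
      · set m : Fin (3 * k) := ⟨n.1, by omega⟩ with hm
        have := hfac m
        rw [prodCores, if_pos h0'] at this
        have hc := ite_ne_zero_imp this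
        have : m.castSucc = n := Fin.ext rfl
        rw [← this]; exact hc.1
    · have hlt : n.1 < 3 * k := by omega
      set m : Fin (3 * k) := ⟨n.1 - 1, by omega⟩ with hm
      have hfm := hfac m
      have hm3 : m.1 % 3 = 0 := by simp [hm]; omega
      rw [prodCores, if_pos hm3] at hfm
      have hc := ite_ne_zero_imp hfm
      have hms : m.succ = n := Fin.ext (by simp [hm]; omega)
      rw [bstar_one i n h1' m rfl, ← hms]
      exact hc.2
    · have hlt : n.1 < 3 * k := by omega
      set m : Fin (3 * k) := ⟨n.1, by omega⟩ with hm
      have hfm := hfac m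
      rw [prodCores, if_neg (by simp [hm]; omega), dif_neg (by simp [hm]; omega)] at hfm
      have hc := ite_ne_zero_imp hfm
      have hmc : m.castSucc = n := Fin.ext rfl
      rw [bstar_two i n h2' m rfl, ← hmc]
      exact hc.1


variable (d k)

/-- the point associated to block `m` and triple `j`: triple `j` in block `m`, zeros elsewhere -/
noncomputable def pt (x : Fin k × (Fin d × Fin d × Fin d)) : Fin (3 * k) → Fin d :=
  fun n => if n.1 / 3 = x.1.1 then
      (if n.1 % 3 = 0 then x.2.1 else if n.1 % 3 = 1 then x.2.2.1 else x.2.2.2)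
    else 0

variable {d k}

lemma pt_eval0 (m : Fin k) (j : Fin d × Fin d × Fin d) (n : Fin (3 * k)) (q : Fin k)
    (hn : n.1 = 3 * q.1) : pt d k (m, j) n = if q = m then j.1 else 0 := by
  by_cases h : q = m
  · have hv : q.1 = m.1 := congrArg Fin.val h
    simp only [pt]; rw [ if_pos (by omega), if_pos (by omega), if_pos h]
  · have hv : q.1 ≠ m.1 := fun hc => h (Fin.ext hc)
    simp only [pt]; rw [ if_neg (by omega), if_neg h]

lemma pt_eval1 (m : Fin k) (j : Fin d × Fin d × Fin d) (n : Fin (3 * k)) (q : Fin k)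
    (hn : n.1 = 3 * q.1 + 1) : pt d k (m, j) n = if q = m then j.2.1 else 0 := by
  by_cases h : q = m
  · have hv : q.1 = m.1 := congrArg Fin.val h
    simp only [pt]; rw [ if_pos (by omega), if_neg (by omega), if_pos (by omega), if_pos h]
  · have hv : q.1 ≠ m.1 := fun hc => h (Fin.ext hc)
    simp only [pt]; rw [ if_neg (by omega), if_neg h]

lemma pt_eval2 (m : Fin k) (j : Fin d × Fin d × Fin d) (n : Fin (3 * k)) (q : Fin k)
    (hn : n.1 = 3 * q.1 + 2) : pt d k (m, j) n = if q = m then j.2.2 else 0 := by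
  by_cases h : q = m
  · have hv : q.1 = m.1 := congrArg Fin.val h
    simp only [pt]; rw [ if_pos (by omega), if_neg (by omega), if_neg (by omega), if_pos h]
  · have hv : q.1 ≠ m.1 := fun hc => h (Fin.ext hc)
    simp only [pt]; rw [ if_neg (by omega), if_neg h]

variable (d k)

/-- the tensors encoding a desired labeling `σ` -/
noncomputable def Aof (σ : (Fin (3 * k) → Fin d) → Bool) :
    Fin k → Fin d → Fin d → Fin d → ℝ :=
  fun q a b c => if a = 0 ∧ b = 0 ∧ c = 0 then 1
    else if σ (pt d k (q, (a, b, c))) then 1 else -1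

variable {d k}

lemma ttEntry_value (σ : (Fin (3 * k) → Fin d) → Bool) (m : Fin k)
    (j : Fin d × Fin d × Fin d) (hj : j ≠ (0, 0, 0)) :
    ttEntry d d (3 * k) (prodCores d k (Aof d k σ)) (pt d k (m, j)) =
      if σ (pt d k (m, j)) then 1 else -1 := by
  rw [ttEntry_prodCores, Fintype.prod_eq_single m]
  · rw [pt_eval0 m j _ m rfl, pt_eval1 m j _ m rfl, pt_eval2 m j _ m rfl,
      if_pos rfl, if_pos rfl, if_pos rfl, Aof]
    rw [if_neg (by rintro ⟨ha, hb, hc⟩; exact hj (Prod.ext ha (Prod.ext hb hc)))]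
  · intro q hq
    rw [pt_eval0 m j _ q rfl, pt_eval1 m j _ q rfl, pt_eval2 m j _ q rfl,
      if_neg hq, if_neg hq, if_neg hq, Aof, if_pos ⟨rfl, rfl, rfl⟩]

end Aux

set_option maxHeartbeats 1000000 in
/-- For `p = 3k` and `r = d`, the pseudo-dimension of the completion class of `p`-th
order tensor-train tensors of rank at most `r = d` is at least `k (d³ - 1)`. -/
theorem tt_completion_pdim_ge (d k : ℕ) (hd : 0 < d) (hk : 0 < k) :
    ((k * (d ^ 3 - 1) : ℕ) : ℕ∞) ≤
      Pdim {g : (Fin (3 * k) → Fin d) → ℝ |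
        ∃ G : Fin (3 * k) → Fin d → Fin d → Fin d → ℝ, g = ttEntry d d (3 * k) G} := by
  rw [Pdim]
  haveI : NeZero d := ⟨hd.ne'⟩
  set J : Finset (Fin k × (Fin d × Fin d × Fin d)) :=
    Finset.univ ×ˢ (Finset.univ.erase (0, 0, 0)) with hJ
  have hinj : Set.InjOn (pt d k) J := by
    rintro ⟨m, j⟩ hx ⟨m', j'⟩ hy hxy
    have hx2 : j ≠ (0, 0, 0) := (Finset.mem_erase.mp (Finset.mem_product.mp hx).2).1
    have e0 := congrFun hxy (⟨3 * m.1, by have := m.2; omega⟩ : Fin (3 * k))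
    have e1 := congrFun hxy (⟨3 * m.1 + 1, by have := m.2; omega⟩ : Fin (3 * k))
    have e2 := congrFun hxy (⟨3 * m.1 + 2, by have := m.2; omega⟩ : Fin (3 * k))
    rw [pt_eval0 m j _ m rfl, pt_eval0 m' j' _ m rfl, if_pos rfl] at e0
    rw [pt_eval1 m j _ m rfl, pt_eval1 m' j' _ m rfl, if_pos rfl] at e1
    rw [pt_eval2 m j _ m rfl, pt_eval2 m' j' _ m rfl, if_pos rfl] at e2
    by_cases hmm : m = m'
    · subst hmm
      rw [if_pos rfl] at e0 e1 e2
      exact Prod.ext rfl (Prod.ext e0 (Prod.ext e1 e2))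
    · rw [if_neg hmm] at e0 e1 e2
      exact absurd (Prod.ext e0 (Prod.ext e1 e2)) hx2
  set pts := J.image (pt d k) with hpts
  have hcard : pts.card = k * (d ^ 3 - 1) := by
    have hT : Fintype.card (Fin d × Fin d × Fin d) = d ^ 3 := by
      rw [Fintype.card_prod, Fintype.card_prod]
      rw [Fintype.card_fin]
      ring
    rw [hpts, Finset.card_image_of_injOn hinj, hJ, Finset.card_product,
      Finset.card_erase_of_mem (Finset.mem_univ _), Finset.card_univ, Finset.card_univ,
      Fintype.card_fin, hT]
  apply le_sSup
  refine ⟨pts, fun _ => 0, by rw [hcard], ?_⟩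
  intro σ
  refine ⟨ttEntry d d (3 * k) (prodCores d k (Aof d k σ)),
    ⟨prodCores d k (Aof d k σ), rfl⟩, ?_⟩
  intro x hx
  obtain ⟨⟨m, j⟩, ha, rfl⟩ := Finset.mem_image.mp hx
  have hj : j ≠ (0, 0, 0) := (Finset.mem_erase.mp (Finset.mem_product.mp ha).2).1
  rw [ttEntry_value σ m j hj]
  cases hσ : σ (pt d k (m, j)) <;> simp [hσ] <;> norm_num
end

section
/- Let r ≤ d^{⌊(p−1)/2⌋} and k = ⌊p/2⌋. There exist fixed TT cores G^{(1)},…,G^{(k−1)}, G^{(k+1)},…,G^{(p)} (with rank bound r) such that for every choice of the middle core G^{(k)} ∈ ℝ^{r×d×r}, the resulting TT tensor T satisfies: T_{i₁,…,i_p} = G^{(k)}_{⟦i₁,…,i_{k−1}⟧, i_k, ⟦i_p,…,i_{k+1}⟧} whenever ⟦i₁,…,i_{k−1}⟧ ≤ r and ⟦i_p,…,i_{k+1}⟧ ≤ r, and T_{i₁,…,i_p} = 0 otherwise, where ⟦j₀,…,j_t⟧ = j₀ + Σ_{τ=1}^t (j_τ − 1)d^τ. Consequently the class of TT-rank-≤r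 tensors sign-shatters r²d indices. -/
open scoped BigOperators

/-- partial left encoding -/
def Sfun (d p : ℕ) (i : Fin p → Fin d) (m : ℕ) : ℕ :=
  ∑ τ : Fin p, if τ.1 < m then (i τ).1 * d ^ τ.1 else 0

/-- partial right encoding -/
def Rfun (d p : ℕ) (i : Fin p → Fin d) (m : ℕ) : ℕ :=
  ∑ τ : Fin p, if m ≤ τ.1 then (i τ).1 * d ^ (p - 1 - τ.1) else 0

lemma Sfun_zero (d p : ℕ) (i : Fin p → Fin d) : Sfun d p i 0 = 0 := by
  simp [Sfun]

lemma Rfun_top (d p : ℕ) (i : Fin p → Fin d) : Rfun d p i p = 0 := by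
  unfold Rfun
  refine Finset.sum_eq_zero fun τ _ => ?_
  rw [if_neg (by omega)]

lemma sum_single (p : ℕ) (g : Fin p → ℕ) (m : ℕ) (hm : m < p) :
    (∑ τ : Fin p, if τ.1 = m then g τ else 0) = g ⟨m, hm⟩ := by
  rw [Finset.sum_eq_single (⟨m, hm⟩ : Fin p)]
  · simp
  · intro b _ hb
    rw [if_neg (by simpa [Fin.ext_iff] using hb)]
  · simp

lemma Sfun_succ (d p : ℕ) (i : Fin p → Fin d) (m : ℕ) (hm : m < p) :
    Sfun d p i (m + 1) = Sfun d p i m + (i ⟨m, hm⟩).1 * d ^ m := by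
  unfold Sfun
  rw [← sum_single p (fun τ => (i τ).1 * d ^ τ.1) m hm, ← Finset.sum_add_distrib]
  refine Finset.sum_congr rfl fun τ _ => ?_
  by_cases h1 : τ.1 < m
  · rw [if_pos (by omega), if_pos h1, if_neg (by omega), add_zero]
  · by_cases h2 : τ.1 = m
    · rw [if_pos (by omega), if_neg h1, if_pos h2, zero_add, h2]
    · rw [if_neg (by omega), if_neg h1, if_neg h2]

lemma Rfun_succ (d p : ℕ) (i : Fin p → Fin d) (m : ℕ) (hm : m < p) :
    Rfun d p i m = Rfun d p i (m + 1) + (i ⟨m, hm⟩).1 * d ^ (p - 1 - m) := by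
  unfold Rfun
  rw [← sum_single p (fun τ => (i τ).1 * d ^ (p - 1 - τ.1)) m hm, ← Finset.sum_add_distrib]
  refine Finset.sum_congr rfl fun τ _ => ?_
  by_cases h1 : m + 1 ≤ τ.1
  · rw [if_pos (by omega), if_pos h1, if_neg (by omega), add_zero]
  · by_cases h2 : τ.1 = m
    · rw [if_pos (by omega), if_neg h1, if_pos h2, zero_add, h2]
    · rw [if_neg (by omega), if_neg h1, if_neg h2]

lemma Sfun_mono (d p : ℕ) (i : Fin p → Fin d) {m m' : ℕ} (h : m ≤ m') :
    Sfun d p i m ≤ Sfun d p i m' := by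
  refine Finset.sum_le_sum fun τ _ => ?_
  by_cases h1 : τ.1 < m
  · rw [if_pos h1, if_pos (by omega)]
  · rw [if_neg h1]; exact Nat.zero_le _

lemma Rfun_anti (d p : ℕ) (i : Fin p → Fin d) {m m' : ℕ} (h : m ≤ m') :
    Rfun d p i m' ≤ Rfun d p i m := by
  refine Finset.sum_le_sum fun τ _ => ?_
  by_cases h1 : m' ≤ τ.1
  · rw [if_pos h1, if_pos (by omega)]
  · rw [if_neg h1]; exact Nat.zero_le _

lemma digitsum (d a : ℕ) : ∀ n, ∑ τ ∈ Finset.range n, (a / d ^ τ % d) * d ^ τ = a % d ^ n := by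
  intro n
  induction n with
  | zero => simp [Nat.mod_one]
  | succ n ih =>
    rw [Finset.sum_range_succ, ih, pow_succ]
    have key : a % (d ^ n * d) = d ^ n * (a / d ^ n % d) + a % d ^ n := by
      conv_lhs => rw [← Nat.div_add_mod (a % (d ^ n * d)) (d ^ n)]
      rw [Nat.mod_mul_right_div_self, Nat.mod_mod_of_dvd a (dvd_mul_right _ _)]
    rw [key]; ring

lemma Sfun_range (d p m0 : ℕ) (hm0 : m0 ≤ p) (i : Fin p → Fin d) (i' : ℕ → ℕ)
    (hf : ∀ τ : Fin p, τ.1 < m0 → ((i τ).1 : ℕ) = i' τ.1) :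
    Sfun d p i m0 = ∑ τ ∈ Finset.range m0, i' τ * d ^ τ := by
  rw [Sfun]
  have h1 : ∀ τ : Fin p, (if τ.1 < m0 then (i τ).1 * d ^ τ.1 else 0)
      = (fun n => if n < m0 then i' n * d ^ n else 0) τ.1 := by
    intro τ; by_cases h : τ.1 < m0
    · simp only [if_pos h, hf τ h]
    · simp only [if_neg h]
  rw [Finset.sum_congr rfl (fun τ _ => h1 τ)]
  refine (Fin.sum_univ_eq_sum_range (fun n => if n < m0 then i' n * d ^ n else 0) p).trans ?_
  rw [← Finset.sum_subset (Finset.range_subset_range.mpr hm0)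
      (fun x _ hnx => if_neg (by simp at hnx ⊢; omega))]
  exact Finset.sum_congr rfl fun x hx => if_pos (by simpa using hx)

lemma Rfun_range (d p m0 : ℕ) (hm0 : m0 < p) (i : Fin p → Fin d) (i' : ℕ → ℕ)
    (hf : ∀ τ : Fin p, m0 + 1 ≤ τ.1 → ((i τ).1 : ℕ) = i' (p - 1 - τ.1)) :
    Rfun d p i (m0 + 1) = ∑ s ∈ Finset.range (p - 1 - m0), i' s * d ^ s := by
  rw [Rfun]
  have h1 : ∀ τ : Fin p, (if m0 + 1 ≤ τ.1 then (i τ).1 * d ^ (p - 1 - τ.1) else 0)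
      = (fun n => if m0 + 1 ≤ n then i' (p - 1 - n) * d ^ (p - 1 - n) else 0) τ.1 := by
    intro τ; by_cases h : m0 + 1 ≤ τ.1
    · simp only [if_pos h, hf τ h]
    · simp only [if_neg h]
  rw [Finset.sum_congr rfl (fun τ _ => h1 τ)]
  refine (Fin.sum_univ_eq_sum_range
    (fun n => if m0 + 1 ≤ n then i' (p - 1 - n) * d ^ (p - 1 - n) else 0) p).trans ?_
  have h2 : (∑ n ∈ Finset.range p, if m0 + 1 ≤ n then i' (p - 1 - n) * d ^ (p - 1 - n) else 0)
      = ∑ n ∈ Finset.Ico (m0 + 1) p, i' (p - 1 - n) * d ^ (p - 1 - n) := by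
    rw [← Finset.sum_subset
        (show Finset.Ico (m0 + 1) p ⊆ Finset.range p from fun x hx => by
          simp at hx ⊢; omega)
        (fun x hx hnx => if_neg (by simp at hx hnx ⊢; omega))]
    exact Finset.sum_congr rfl fun x hx => if_pos (by simp at hx; omega)
  rw [h2]
  refine Finset.sum_nbij' (fun n => p - 1 - n) (fun s => p - 1 - s) ?_ ?_ ?_ ?_ ?_
  · intro a ha; simp at ha ⊢; omega
  · intro a ha; simp at ha ⊢; omega
  · intro a ha; simp at ha; show p - 1 - (p - 1 - a) = a; omega
  · intro a ha; simp at ha; show p - 1 - (p - 1 - a) = a; omega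
  · intro a ha
    simp at ha
    congr 2 <;> omega

noncomputable def coreG (d r p m0 : ℕ) (mid : Fin r → Fin d → Fin r → ℝ) :
    Fin p → Fin r → Fin d → Fin r → ℝ :=
  fun m α j β =>
    if m.1 < m0 then (if β.1 = α.1 + j.1 * d ^ m.1 then 1 else 0)
    else if m.1 = m0 then mid α j β
    else (if α.1 = β.1 + j.1 * d ^ (p - 1 - m.1) then 1 else 0)


lemma term_ne_zero {d r p m0 : ℕ} (hm0 : m0 < p) (mid : Fin r → Fin d → Fin r → ℝ)
    (i : Fin p → Fin d) (β : Fin (p + 1) → Fin r)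
    (h : (if (β 0).1 = 0 ∧ (β (Fin.last p)).1 = 0 then (1 : ℝ) else 0) *
      ∏ m : Fin p, coreG d r p m0 mid m (β m.castSucc) (i m) (β m.succ) ≠ 0) :
    (∀ m (hm : m ≤ m0), (β ⟨m, by omega⟩).1 = Sfun d p i m) ∧
    (∀ m (hm1 : m0 < m) (hm2 : m ≤ p), (β ⟨m, by omega⟩).1 = Rfun d p i m) := by
  have hind : (β 0).1 = 0 ∧ (β (Fin.last p)).1 = 0 := by
    by_contra hc
    rw [if_neg hc, zero_mul] at h
    exact h rfl
  have hfac : ∀ m : Fin p, coreG d r p m0 mid m (β m.castSucc) (i m) (β m.succ) ≠ 0 :=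
    fun m => Finset.prod_ne_zero_iff.mp (right_ne_zero_of_mul h) m (Finset.mem_univ m)
  have hstepL : ∀ m (hm : m < m0),
      (β ⟨m + 1, by omega⟩).1 = (β ⟨m, by omega⟩).1 + (i ⟨m, by omega⟩).1 * d ^ m := by
    intro m hm
    have := hfac ⟨m, by omega⟩
    rw [coreG, if_pos hm] at this
    by_cases hc : ((⟨m, by omega⟩ : Fin p).succ.1 : ℕ) = 0 -- dummy
    all_goals {
      by_cases hc2 : (β (⟨m, by omega⟩ : Fin p).succ).1 =
          (β (⟨m, by omega⟩ : Fin p).castSucc).1 + (i ⟨m, by omega⟩).1 * d ^ m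
      · exact hc2
      · rw [if_neg hc2] at this; exact absurd rfl this }
  have hstepR : ∀ m (hm1 : m0 < m) (hm2 : m < p),
      (β ⟨m, by omega⟩).1 = (β ⟨m + 1, by omega⟩).1 + (i ⟨m, by omega⟩).1 * d ^ (p - 1 - m) := by
    intro m hm1 hm2
    have := hfac ⟨m, by omega⟩
    rw [coreG, if_neg (show ¬ ((⟨m, by omega⟩ : Fin p).1 < m0) from by exact (by omega : ¬ (m < m0))),
      if_neg (show ¬ ((⟨m, by omega⟩ : Fin p).1 = m0) from by exact (by omega : ¬ (m = m0)))] at this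
    by_cases hc2 : (β (⟨m, by omega⟩ : Fin p).castSucc).1 =
        (β (⟨m, by omega⟩ : Fin p).succ).1 + (i ⟨m, by omega⟩).1 * d ^ (p - 1 - m)
    · exact hc2
    · rw [if_neg hc2] at this; exact absurd rfl this
  constructor
  · intro m hm
    induction m with
    | zero =>
      rw [Sfun_zero]
      have h0 : (0 : Fin (p + 1)) = ⟨0, by omega⟩ := by ext; simp
      rw [← h0]; exact hind.1
    | succ n ih =>
      rw [Sfun_succ d p i n (by omega), ← ih (by omega)]
      exact hstepL n (by omega)
  · intro m hm1 hm2
    -- downward: induct on t = p - m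
    have aux : ∀ t, t ≤ p - (m0 + 1) → (β ⟨p - t, by omega⟩).1 = Rfun d p i (p - t) := by
      intro t
      induction t with
      | zero =>
        intro _
        have hl : (⟨p - 0, by omega⟩ : Fin (p + 1)) = Fin.last p := by ext; simp
        rw [hl, Nat.sub_zero, Rfun_top]
        exact hind.2
      | succ n ih =>
        intro hn
        have h1 : p - (n + 1) < p := by omega
        have h2 : p - (n + 1) + 1 = p - n := by omega
        have := hstepR (p - (n + 1)) (by omega) h1
        rw [this]
        have ihn := ih (by omega)
        have hcast : (β ⟨p - (n + 1) + 1, by omega⟩).1 = Rfun d p i (p - n) := by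
          have : (⟨p - (n + 1) + 1, by omega⟩ : Fin (p + 1)) = ⟨p - n, by omega⟩ := by
            ext; simp [h2]
          rw [this]; exact ihn
        rw [hcast, Rfun_succ d p i (p - (n + 1)) h1, h2]
    have hm' : m = p - (p - m) := by omega
    have := aux (p - m) (by omega)
    have heq : (⟨p - (p - m), by omega⟩ : Fin (p + 1)) = ⟨m, by omega⟩ := by ext; simp; omega
    rw [heq] at this
    rw [this]
    congr 1
    omega

lemma main_eval (d r p : ℕ) (hr0 : 0 < r) (m0 : ℕ) (hm0 : m0 < p)
    (mid : Fin r → Fin d → Fin r → ℝ) (i : Fin p → Fin d) :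
    ttEntry d r p (coreG d r p m0 mid) i =
      if hL : Sfun d p i m0 < r then
        if hR : Rfun d p i (m0 + 1) < r then
          mid ⟨_, hL⟩ (i ⟨m0, hm0⟩) ⟨_, hR⟩ else 0
      else 0 := by
  by_cases hL : Sfun d p i m0 < r
  · by_cases hR : Rfun d p i (m0 + 1) < r
    · rw [dif_pos hL, dif_pos hR]
      set βs : Fin (p + 1) → Fin r := fun m =>
        if h : m.1 ≤ m0 then ⟨Sfun d p i m.1, lt_of_le_of_lt (Sfun_mono d p i h) hL⟩
        else ⟨Rfun d p i m.1, lt_of_le_of_lt (Rfun_anti d p i (by omega)) hR⟩ with hβs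
      rw [ttEntry, Fintype.sum_eq_single βs]
      · -- value at βs
        have hval0 : (βs 0).1 = 0 := by
          have h0 : ((0 : Fin (p + 1)).1 : ℕ) = 0 := rfl
          simp only [hβs, h0]
          rw [dif_pos (by omega)]
          exact Sfun_zero d p i
        have hvalp : (βs (Fin.last p)).1 = 0 := by
          simp only [hβs, Fin.val_last]
          rw [dif_neg (by omega)]
          exact Rfun_top d p i
        rw [if_pos ⟨hval0, hvalp⟩, one_mul]
        rw [Fintype.prod_eq_single (⟨m0, hm0⟩ : Fin p)]
        · -- middle factor
          have hc : ((⟨m0, hm0⟩ : Fin p).castSucc).1 = m0 := rfl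
          have hs : ((⟨m0, hm0⟩ : Fin p).succ).1 = m0 + 1 := rfl
          rw [coreG]
          rw [if_neg (show ¬ ((⟨m0, hm0⟩ : Fin p).1 < m0) from by exact (by omega : ¬ (m0 < m0)))]
          rw [if_pos (show ((⟨m0, hm0⟩ : Fin p).1 = m0) from rfl)]
          congr 1
          · ext
            simp only [hβs, hc]
            rw [dif_pos (le_refl m0)]
          · ext
            simp only [hβs, hs]
            rw [dif_neg (by omega)]
        · -- other factors are 1
          intro m hm
          have hmne : m.1 ≠ m0 := fun hc => hm (Fin.ext hc)
          rcases lt_or_gt_of_ne hmne with hlt | hgt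
          · rw [coreG, if_pos hlt, if_pos]
            have hc : (βs m.castSucc).1 = Sfun d p i m.1 := by
              simp only [hβs, Fin.coe_castSucc]
              rw [dif_pos (by omega)]
            have hs : (βs m.succ).1 = Sfun d p i (m.1 + 1) := by
              simp only [hβs, Fin.val_succ]
              rw [dif_pos (by omega)]
            rw [hc, hs, Sfun_succ d p i m.1 m.2]
          · rw [coreG, if_neg (by omega), if_neg hmne, if_pos]
            have hc : (βs m.castSucc).1 = Rfun d p i m.1 := by
              simp only [hβs, Fin.coe_castSucc]
              rw [dif_neg (by omega)]
            have hs : (βs m.succ).1 = Rfun d p i (m.1 + 1) := by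
              simp only [hβs, Fin.val_succ]
              rw [dif_neg (by omega)]
            rw [hc, hs, Rfun_succ d p i m.1 m.2]
      · -- other β give 0
        intro β hβ
        by_contra hne
        obtain ⟨hLchain, hRchain⟩ := term_ne_zero hm0 mid i β hne
        apply hβ
        funext m
        ext
        by_cases hm : m.1 ≤ m0
        · have := hLchain m.1 hm
          simp only [hβs]
          rw [dif_pos hm]
          exact this
        · have := hRchain m.1 (by omega) (by omega)
          simp only [hβs]
          rw [dif_neg hm]
          exact this
    · rw [dif_pos hL, dif_neg hR, ttEntry]
      refine Finset.sum_eq_zero fun β _ => ?_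
      by_contra hne
      obtain ⟨-, hRchain⟩ := term_ne_zero hm0 mid i β hne
      have := hRchain (m0 + 1) (by omega) (by omega)
      exact hR (this ▸ (β ⟨m0 + 1, by omega⟩).2)
  · rw [dif_neg hL, ttEntry]
    refine Finset.sum_eq_zero fun β _ => ?_
    by_contra hne
    obtain ⟨hLchain, -⟩ := term_ne_zero hm0 mid i β hne
    have := hLchain m0 (le_refl m0)
    exact hL (this ▸ (β ⟨m0, by omega⟩).2)

/-- digit-encoding index map -/

def ttEmb (d r p m0 : ℕ) (hd : 0 < d) (α : Fin r) (j : Fin d) (γ : Fin r) :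
    Fin p → Fin d :=
  fun τ => if τ.1 < m0 then ⟨α.1 / d ^ τ.1 % d, Nat.mod_lt _ hd⟩
    else if τ.1 = m0 then j
    else ⟨γ.1 / d ^ (p - 1 - τ.1) % d, Nat.mod_lt _ hd⟩


lemma Sfun_emb (d r p m0 : ℕ) (hd : 0 < d) (hm0 : m0 < p) (hα' : r ≤ d ^ m0)
    (α : Fin r) (j : Fin d) (γ : Fin r) :
    Sfun d p (ttEmb d r p m0 hd α j γ) m0 = α.1 := by
  rw [Sfun_range d p m0 (le_of_lt hm0) _ (fun τ => α.1 / d ^ τ % d)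
      (fun τ hτ => by simp only [ttEmb, if_pos hτ])]
  rw [digitsum]
  exact Nat.mod_eq_of_lt (lt_of_lt_of_le α.2 hα')

lemma Rfun_emb (d r p m0 : ℕ) (hd : 0 < d) (hm0 : m0 < p) (hγ' : r ≤ d ^ (p - 1 - m0))
    (α : Fin r) (j : Fin d) (γ : Fin r) :
    Rfun d p (ttEmb d r p m0 hd α j γ) (m0 + 1) = γ.1 := by
  rw [Rfun_range d p m0 hm0 _ (fun s => γ.1 / d ^ s % d)
      (fun τ hτ => by simp only [ttEmb, if_neg (by omega : ¬ (τ.1 < m0)),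
        if_neg (by omega : ¬ (τ.1 = m0))])]
  rw [digitsum]
  exact Nat.mod_eq_of_lt (lt_of_lt_of_le γ.2 hγ')

lemma emb_mid (d r p m0 : ℕ) (hd : 0 < d) (hm0 : m0 < p)
    (α : Fin r) (j : Fin d) (γ : Fin r) :
    ttEmb d r p m0 hd α j γ ⟨m0, hm0⟩ = j := by
  simp only [ttEmb]
  rw [if_neg (by omega : ¬ (m0 < m0))]
  simp

lemma emb_inj (d r p m0 : ℕ) (hd : 0 < d) (hm0 : m0 < p)
    (hα' : r ≤ d ^ m0) (hγ' : r ≤ d ^ (p - 1 - m0)) :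
    Function.Injective (fun t : Fin r × Fin d × Fin r =>
      ttEmb d r p m0 hd t.1 t.2.1 t.2.2) := by
  rintro ⟨α, j, γ⟩ ⟨α', j', γ'⟩ h
  simp only [Prod.mk.injEq] at h ⊢
  refine ⟨?_, ?_, ?_⟩
  · ext
    rw [← Sfun_emb d r p m0 hd hm0 hα' α j γ, ← Sfun_emb d r p m0 hd hm0 hα' α' j' γ', h]
  · rw [← emb_mid d r p m0 hd hm0 α j γ, ← emb_mid d r p m0 hd hm0 α' j' γ', h]
  · ext
    rw [← Rfun_emb d r p m0 hd hm0 hγ' α j γ, ← Rfun_emb d r p m0 hd hm0 hγ' α' j' γ', h]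



/-- Let `r ≤ d^⌊(p-1)/2⌋` and let `k = ⌊p/2⌋` (so the middle core sits at `0`-based
position `p/2 - 1`). There exist fixed cores such that, for every choice of the middle
core `mid ∈ ℝ^{r×d×r}`, the resulting TT tensor has entry
`mid_{⟦i₁,…,i_{k-1}⟧, i_k, ⟦i_p,…,i_{k+1}⟧}` whenever both (0-based) base-`d`
encodings are `< r`, and `0` otherwise. Consequently, the class of TT-rank-`≤ r`
tensors sign-shatters a set of `r² d` indices. -/
theorem tt_middle_core_recovery_and_shatter (d r p : ℕ) (hd : 0 < d) (hr0 : 0 < r)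
    (hp : 2 ≤ p) (hr : r ≤ d ^ ((p - 1) / 2)) :
    (∃ G : Fin p → Fin r → Fin d → Fin r → ℝ,
      ∀ (mid : Fin r → Fin d → Fin r → ℝ) (i : Fin p → Fin d),
        ttEntry d r p (fun m => if m.1 = p / 2 - 1 then mid else G m) i
        = (if hL : (∑ τ : Fin p, if τ.1 < p / 2 - 1 then (i τ).1 * d ^ τ.1 else 0) < r then
            (if hR : (∑ τ : Fin p, if p / 2 ≤ τ.1 then (i τ).1 * d ^ (p - 1 - τ.1) else 0) < r then
              mid ⟨_, hL⟩ (i ⟨p / 2 - 1, by omega⟩) ⟨_, hR⟩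
             else 0)
           else 0))
    ∧ ∃ S : Finset (Fin p → Fin d), S.card = r ^ 2 * d ∧
        BShatters {g : (Fin p → Fin d) → ℝ |
          ∃ G : Fin p → Fin r → Fin d → Fin r → ℝ, g = ttEntry d r p G} S := by
  have hm0a : p / 2 - 1 < p := by omega
  constructor
  · -- Part 1: middle core recovery at position p/2 - 1
    refine ⟨coreG d r p (p / 2 - 1) (fun _ _ _ => 0), fun mid i => ?_⟩
    have hcoreeq : (fun m : Fin p => if m.1 = p / 2 - 1 then mid
          else coreG d r p (p / 2 - 1) (fun _ _ _ => 0) m)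
        = coreG d r p (p / 2 - 1) mid := by
      funext m
      by_cases hm : m.1 = p / 2 - 1
      · rw [if_pos hm]
        funext a b c
        simp only [coreG]
        rw [if_neg (by omega : ¬ (m.1 < p / 2 - 1)), if_pos hm]
      · rw [if_neg hm]
        funext a b c
        simp only [coreG]
        by_cases h2 : m.1 < p / 2 - 1
        · simp [h2]
        · simp [h2, hm]
    rw [hcoreeq, main_eval d r p hr0 (p / 2 - 1) hm0a mid i,
      (by omega : p / 2 - 1 + 1 = p / 2)]
    rfl
  · -- Part 2: shattering with the free core at position (p-1)/2
    have hm0 : (p - 1) / 2 < p := by omega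
    have hα' : r ≤ d ^ ((p - 1) / 2) := hr
    have hγ' : r ≤ d ^ (p - 1 - (p - 1) / 2) :=
      le_trans hr (Nat.pow_le_pow_right hd (by omega))
    have hinj := emb_inj d r p ((p - 1) / 2) hd hm0 hα' hγ'
    refine ⟨Finset.image (fun t : Fin r × Fin d × Fin r =>
        ttEmb d r p ((p - 1) / 2) hd t.1 t.2.1 t.2.2) Finset.univ, ?_, ?_⟩
    · rw [Finset.card_image_of_injective _ hinj, Finset.card_univ]
      simp only [Fintype.card_prod, Fintype.card_fin]
      ring
    · intro σ
      set mid : Fin r → Fin d → Fin r → ℝ := fun α j γ =>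
        if σ (ttEmb d r p ((p - 1) / 2) hd α j γ) = true then 1 else -1 with hmid
      refine ⟨ttEntry d r p (coreG d r p ((p - 1) / 2) mid),
        ⟨coreG d r p ((p - 1) / 2) mid, rfl⟩, ?_⟩
      intro x hx
      obtain ⟨t, -, rfl⟩ := Finset.mem_image.mp hx
      obtain ⟨α, j, γ⟩ := t
      have hS := Sfun_emb d r p ((p - 1) / 2) hd hm0 hα' α j γ
      have hR := Rfun_emb d r p ((p - 1) / 2) hd hm0 hγ' α j γ
      have hj := emb_mid d r p ((p - 1) / 2) hd hm0 α j γ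
      rw [main_eval d r p hr0 ((p - 1) / 2) hm0 mid _]
      simp only [hS, hR]
      rw [dif_pos α.2, dif_pos γ.2]
      by_cases hσ : σ (ttEmb d r p ((p - 1) / 2) hd α j γ) = true
      · simp [hmid, hj, hσ]
      · simp [hmid, hj, hσ]
end
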